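/- Let E → M be a smooth vector bundle over a smooth manifold M and let s₁, s₂ : M → E be two smooth sections such that at every point m with s₁(m) = s₂(m), the difference of their vertical derivatives (the linear map T_mM → E_m given by w ↦ vertical part of (T_m s₁ − T_m s₂)(w)) is an isomorphism. Then the images of s₁ and s₂ intersect transversely in the total space E, and the intersection set {m : s₁(m) = s₂(m)} is discrete. -/

import Mathlib

open Topology Filter

/-- Two smooth sections of a (trivial model of a) vector bundle whose fiber
dimension equals the base dimension, such that at every coincidence point the difference of
their vertical derivatives is a (linear) isomorphism, have transverse images (the tangent
spaces of their graphs span the tangent space of the total space at every coincidence point)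
and a discrete coincidence set. -/
theorem stmt1 {V W : Type*} [NormedAddCommGroup V] [NormedSpace ℝ V] [FiniteDimensional ℝ V]
    [NormedAddCommGroup W] [NormedSpace ℝ W] [FiniteDimensional ℝ W]
    (hdim : Module.finrank ℝ W = Module.finrank ℝ V)
    (s₁ s₂ : V → W) (hs₁ : ContDiff ℝ (⊤ : ℕ∞) s₁) (hs₂ : ContDiff ℝ (⊤ : ℕ∞) s₂)
    (hiso : ∀ m : V, s₁ m = s₂ m →
      Function.Bijective (fun w => fderiv ℝ s₁ m w - fderiv ℝ s₂ m w)) :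
    (∀ m : V, s₁ m = s₂ m →
        LinearMap.range
            (LinearMap.prod (LinearMap.id : V →ₗ[ℝ] V) (fderiv ℝ s₁ m).toLinearMap) ⊔
          LinearMap.range
            (LinearMap.prod (LinearMap.id : V →ₗ[ℝ] V) (fderiv ℝ s₂ m).toLinearMap) =
          (⊤ : Submodule ℝ (V × W))) ∧
      DiscreteTopology {m : V | s₁ m = s₂ m} := by
  constructor
  · intro m hm
    rw [eq_top_iff]
    rintro ⟨a, b⟩ -
    obtain ⟨u, hu⟩ := (hiso m hm).2 (b - fderiv ℝ s₂ m a)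
    simp only at hu
    refine Submodule.mem_sup.2 ⟨(u, fderiv ℝ s₁ m u), ⟨u, rfl⟩,
      (a - u, fderiv ℝ s₂ m (a - u)), ⟨a - u, rfl⟩, ?_⟩
    refine Prod.ext (by simp) ?_
    show fderiv ℝ s₁ m u + fderiv ℝ s₂ m (a - u) = b
    rw [map_sub]
    rw [eq_sub_iff_add_eq] at hu
    rw [← hu]
    abel
  · rw [discreteTopology_subtype_iff]
    intro m hm
    simp only [Set.mem_setOf_eq] at hm
    set f : V → W := fun x => s₁ x - s₂ x with hf
    have hdf : ∀ x, fderiv ℝ f x = fderiv ℝ s₁ x - fderiv ℝ s₂ x := fun x =>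
      fderiv_fun_sub (hs₁.differentiable (by simp) x) (hs₂.differentiable (by simp) x)
    have hbij : Function.Bijective (fderiv ℝ f m) := by
      rw [hdf]
      exact hiso m hm
    set e : V ≃L[ℝ] W :=
      (LinearEquiv.ofBijective (fderiv ℝ f m : V →ₗ[ℝ] W) hbij).toContinuousLinearEquiv
    have hce : (e : V →L[ℝ] W) = fderiv ℝ f m := by
      ext v; rfl
    have hstrict : HasStrictFDerivAt f (e : V →L[ℝ] W) m := by
      rw [hce]
      exact ((hs₁.sub hs₂).contDiffAt).hasStrictFDerivAt (by simp)
    have hinj : ∀ᶠ y in 𝓝 m, hstrict.localInverse f e m (f y) = y :=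
      hstrict.eventually_left_inverse
    rw [← Filter.empty_mem_iff_bot]
    have : ∀ᶠ y in 𝓝[≠] m, hstrict.localInverse f e m (f y) = y :=
      nhdsWithin_le_nhds hinj
    refine Filter.mem_inf_of_inter (Filter.inter_mem this self_mem_nhdsWithin)
      (Filter.mem_principal_self _) ?_
    rintro y ⟨⟨h1, h2⟩, h3⟩
    simp only [Set.mem_setOf_eq] at h3
    apply h2
    have hfy : f y = f m := by simp [hf, h3, hm]
    have h4 := hinj.self_of_nhds
    simp only [Set.mem_setOf_eq] at h1
    rw [hfy, h4] at h1
    exact h1.symm
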